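/- Let c be a positive integer and define the sequence {U_n}_{n≥0} by U_0 = 0, U_1 = 1, and U_{n+1} = c·U_n + U_{n−1} for n ≥ 1. Suppose n is a positive integer with n ≡ 2 (mod 4), and p is a prime which divides U_n but divides none of U_1, …, U_{n−1}. Then for every k ∈ ℕ and every r ∈ {0, 1, …, n−1}, one has U_{kn+r} ≡ U_r (mod p). -/
import Mathlib


/-- The Lucas-type sequence `U_0 = 0`, `U_1 = 1`, `U_{n+1} = c·U_n + U_{n-1}`. -/
def U (c : ℕ) : ℕ → ℕ
  | 0 => 0
  | 1 => 1
  | n + 2 => c * U c (n + 1) + U c n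

lemma U_rec (c m : ℕ) : U c (m+2) = c * U c (m+1) + U c m := rfl

lemma U_addf (c a : ℕ) : ∀ b, U c (a + b + 1) = U c a * U c b + U c (a+1) * U c (b+1)
  | 0 => by simp [U]
  | 1 => by
      have e : a + 1 + 1 = a + 2 := by ring
      rw [e, U_rec]
      simp [U]; ring
  | (b+2) => by
      have h1 := U_addf c a b
      have h2 := U_addf c a (b+1)
      have e : a + (b+2) + 1 = (a + b + 1) + 2 := by ring
      rw [e, U_rec]
      have e2 : a + b + 1 + 1 = a + (b+1) + 1 := by ring
      rw [e2, h2, h1]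
      have e3 : b + 2 + 1 = (b+1) + 2 := by ring
      rw [e3, U_rec c (b+1), U_rec c b]
      ring

lemma U_cat (c : ℕ) : ∀ m : ℕ, (U c (m+2) : ℤ) * U c m - (U c (m+1))^2 = (-1)^(m+1)
  | 0 => by simp [U]
  | (m+1) => by
      have ih := U_cat c m
      have e2 : (U c (m+2) : ℤ) = c * U c (m+1) + U c m := by
        rw [U_rec]; push_cast; ring
      have e3 : (U c (m+3) : ℤ) = c * U c (m+2) + U c (m+1) := by
        rw [show m+3 = (m+1)+2 from by ring, U_rec]; push_cast; ring
      rw [show m+1+2 = m+3 from by ring, show m+1+1 = m+2 from by ring]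
      linear_combination (U c (m+1):ℤ)*e3 - (U c (m+2):ℤ)*e2 - ih


/-- Lemma 4.1: If `c ≥ 1`, `n > 0`, `n ≡ 2 (mod 4)`, and `p` is a prime
dividing `U_n` but none of `U_1, …, U_{n-1}`, then `U_{kn+r} ≡ U_r (mod p)` for all
`k ∈ ℕ` and `0 ≤ r < n`. -/
theorem lucas_seq_periodicity_mod_primitive_prime
    (c : ℕ) (hc : 0 < c) (n : ℕ) (hn : 0 < n) (hn4 : n % 4 = 2)
    (p : ℕ) (hp : p.Prime) (hdvd : p ∣ U c n)
    (hprim : ∀ m : ℕ, 0 < m → m < n → ¬ p ∣ U c m) :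
    ∀ k r : ℕ, r < n → U c (k * n + r) ≡ U c r [MOD p] := by
  have hpf : Fact p.Prime := ⟨hp⟩
  obtain ⟨t, ht⟩ : ∃ t, n = 4*t + 2 := ⟨n/4, by omega⟩
  set f : ℕ → ZMod p := fun m => ((U c m : ℕ) : ZMod p) with hf
  have hfn : f n = 0 := by
    simpa [hf, ZMod.natCast_eq_zero_iff] using hdvd
  have hfm : f (2*t+1) ≠ 0 := by
    simp only [hf, ne_eq, ZMod.natCast_eq_zero_iff]
    exact hprim (2*t+1) (by omega) (by omega)
  -- p | U(m+1) + U(m-1)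
  have hsplit : U c n = U c (2*t+1) * (U c (2*t) + U c (2*t+2)) := by
    have := U_addf c (2*t+1) (2*t)
    rw [show 2*t+1+2*t+1 = n from by omega] at this
    rw [this, show 2*t+1+1 = 2*t+2 from by ring, show 2*t+1 = 2*t+1 from rfl]
    ring
  have hL : f (2*t) + f (2*t+2) = 0 := by
    have h0 : f (2*t+1) * (f (2*t) + f (2*t+2)) = 0 := by
      have := congrArg (fun x : ℕ => (x : ZMod p)) hsplit
      push_cast at this
      rw [hf]; push_cast
      rw [← this]; exact hfn
    rcases mul_eq_zero.mp h0 with h | h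
    · exact absurd h hfm
    · exact h
  -- f (n+1) = 1
  have hcat : f (2*t+2) * f (2*t) - f (2*t+1)^2 = -1 := by
    have := congrArg (fun x : ℤ => (x : ZMod p)) (U_cat c (2*t))
    push_cast at this
    rw [hf]; push_cast
    rw [this, show 2*t+1 = 2*t+1 from rfl]
    rw [pow_succ, pow_mul]
    simp
  have hfn1 : f (n+1) = 1 := by
    have hadd := U_addf c (2*t+1) (2*t+1)
    rw [show 2*t+1+(2*t+1)+1 = n+1 from by omega] at hadd
    have hcast : f (n+1) = f (2*t+1) * f (2*t+1) + f (2*t+1+1) * f (2*t+1+1) := by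
      simp only [hf]; exact_mod_cast congrArg (fun x : ℕ => (x : ZMod p)) hadd
    rw [show 2*t+1+1 = 2*t+2 from by ring] at hcast
    rw [hcast]
    linear_combination -hcat + f (2*t+2) * hL
  have hfprev : f (4*t+1) = 1 := by
    have hrec := U_rec c (4*t+1)
    rw [show 4*t+1+2 = n+1 from by omega, show 4*t+1+1 = n from by omega] at hrec
    have hcast : f (n+1) = c * f n + f (4*t+1) := by
      simp only [hf]; exact_mod_cast congrArg (fun x : ℕ => (x : ZMod p)) hrec
    rw [hfn1, hfn, mul_zero, zero_add] at hcast
    exact hcast.symm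
  have key : ∀ k r : ℕ, f (k*n + r) = f r := by
    intro k
    induction k with
    | zero => intro r; simp
    | succ k ih =>
      intro r
      have hadd := U_addf c (k*n + r) (4*t+1)
      rw [show k*n + r + (4*t+1) + 1 = (k+1)*n + r from by rw [ht]; ring] at hadd
      have hcast : f ((k+1)*n + r) = f (k*n+r) * f (4*t+1) + f (k*n+r+1) * f (4*t+1+1) := by
        simp only [hf]; exact_mod_cast congrArg (fun x : ℕ => (x : ZMod p)) hadd
      rw [show (4*t+1+1 : ℕ) = n from by omega, hfn, hfprev, mul_zero, add_zero, mul_one, ih] at hcast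
      exact hcast
  intro k r _
  exact (ZMod.natCast_eq_natCast_iff _ _ _).mp (key k r)
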